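/- For every finite player set N with |N| > 1, there exists an interval game (N,w') that is a superadditive interval game but is not selection superadditive; in particular, the game defined by w'(S) = [0, |S|] for every nonempty S ⊆ N and w'(∅) = [0,0] is a superadditive interval game but not selection superadditive. -/

import Mathlib

/-- `v` is a selection of the interval game with lower bounds `wl` and upper bounds `wu`. -/
def IsSelection {n : ℕ} (wl wu v : Finset (Fin n) → ℝ) : Prop :=
  ∀ S : Finset (Fin n), wl S ≤ v S ∧ v S ≤ wu S

/-- A classical cooperative game is superadditive. -/
def SuperadditiveGame {n : ℕ} (v : Finset (Fin n) → ℝ) : Prop :=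
  ∀ S T : Finset (Fin n), Disjoint S T → v S + v T ≤ v (S ∪ T)

/-- A superadditive interval game: `w(S) + w(T) ⪯ w(S ∪ T)` for disjoint `S`, `T`,
and the length game is superadditive. -/
def SuperadditiveIntervalGame {n : ℕ} (wl wu : Finset (Fin n) → ℝ) : Prop :=
  (∀ S T : Finset (Fin n), Disjoint S T →
    wl S + wl T ≤ wl (S ∪ T) ∧ wu S + wu T ≤ wu (S ∪ T)) ∧
  SuperadditiveGame (fun S => wu S - wl S)

/-- Lower bound of the game `w'(S) = [0, |S|]` (also `w'(∅) = [0,0]`). -/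
def wl6 {n : ℕ} (_S : Finset (Fin n)) : ℝ := 0

/-- Upper bound of the game `w'(S) = [0, |S|]` (also `w'(∅) = [0,0]`). -/
def wu6 {n : ℕ} (S : Finset (Fin n)) : ℝ := (S.card : ℝ)

/-- For `|N| > 1`, the game `w'(S) = [0, |S|]` is a superadditive interval game but is
not selection superadditive. -/
theorem interval_superadditive_not_selection_superadditive {n : ℕ} (hn : 1 < n) :
    SuperadditiveIntervalGame (wl6 (n := n)) wu6 ∧
    ¬ (∀ v : Finset (Fin n) → ℝ, IsSelection wl6 wu6 v → SuperadditiveGame v) := by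
  constructor
  · constructor
    · intro S T hST
      constructor
      · simp [wl6]
      · simp only [wu6]
        rw [Finset.card_union_of_disjoint hST]
        push_cast; exact le_refl _
    · intro S T hST
      simp only [wl6, wu6, sub_zero]
      rw [Finset.card_union_of_disjoint hST]
      push_cast; exact le_refl _
  · intro h
    set v : Finset (Fin n) → ℝ := fun S => if S.card = 1 then 1 else 0 with hv
    have hsel : IsSelection wl6 wu6 v := by
      intro S
      constructor
      · simp only [wl6, hv]; positivity
      · simp only [wu6, hv]
        split
        · rename_i h1; rw [h1]; norm_num
        · positivity
    have hsa := h v hsel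
    set a : Fin n := ⟨0, by omega⟩
    set b : Fin n := ⟨1, by omega⟩
    have h0 : a ≠ b := by
      intro heq; exact absurd (congrArg Fin.val heq) (by simp [a, b])
    have hd : Disjoint ({a} : Finset (Fin n)) {b} := by simp [h0, h0.symm]
    have hkey := hsa {a} {b} hd
    have hc : (({a} ∪ {b} : Finset (Fin n))).card = 2 := by
      rw [Finset.card_union_of_disjoint hd]; simp
    simp [hv, hc, Finset.card_pair h0] at hkey
    linarith
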